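/- Suppose for each i ∈ {1,...,m}, Q_i : ℕ → ℝ≥0 satisfies Q_{n,i} ≤ p_i · ∑_{n₁+⋯+n_l=n−1} ∏_{k=1}^l Q_{n_k,i_k} with Q_{0,j} = 1, where N_i = {i₁,...,i_l} and p_i = χ_i ∏_{j∈N_i}(1-χ_j) with χ_j ∈ (0,1). Then for all n and i, Q_{n,i} ≤ χ_i ∏_{t=2}^{n} M_t where each factor M_t ≤ max_j (1-χ_j); in particular Q_{n,i} ≤ χ_i · M^{n-1} with M = max_j(1-χ_j). -/

import Mathlib

private lemma sortProd {m : ℕ} (s : Finset (Fin m)) (φ : Fin m → ℝ) :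
    (∏ k : Fin s.card, φ ((s.sort (· ≤ ·)).get
      (Fin.cast (s.length_sort (· ≤ ·)).symm k))) = ∏ j ∈ s, φ j := by
  rw [Fin.prod_congr' (fun k => φ ((s.sort (· ≤ ·)).get k)) (s.length_sort (· ≤ ·)).symm]
  have h1 : (∏ k : Fin (s.sort (· ≤ ·)).length, φ ((s.sort (· ≤ ·)).get k))
      = ((s.sort (· ≤ ·)).map φ).prod := by
    rw [← List.prod_ofFn]
    congr 1
    conv_rhs => rw [← List.ofFn_get (s.sort (· ≤ ·))]
    rw [List.map_ofFn]
    rfl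
  rw [h1, ← Finset.prod_map_toList s φ]
  exact (List.Perm.map φ (s.sort_perm_toList (· ≤ ·))).prod_eq

private lemma partial_sum_bound {m : ℕ}
    (χ : Fin m → ℝ) (hχ : ∀ i, χ i ∈ Set.Ioo (0 : ℝ) 1)
    (N : Fin m → Finset (Fin m))
    (p : Fin m → ℝ) (hp : ∀ i, p i = χ i * ∏ j ∈ N i, (1 - χ j))
    (Q : ℕ → Fin m → ℝ) (hQ0 : ∀ j, Q 0 j = 1) (hQnonneg : ∀ n i, 0 ≤ Q n i)
    (hrec : ∀ (n : ℕ), 1 ≤ n → ∀ i : Fin m,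
      Q n i ≤ p i *
        ∑ f ∈ Finset.Nat.antidiagonalTuple (N i).card (n - 1),
          ∏ k : Fin (N i).card,
            Q (f k) (((N i).sort (· ≤ ·)).get
              (Fin.cast ((N i).length_sort (· ≤ ·)).symm k)))
    (M : ℝ) (hM : 0 < M) (hMmax : ∀ j, 1 - χ j ≤ M) :
    ∀ n : ℕ, ∀ i : Fin m,
      (∑ a ∈ Finset.range n, Q (a + 1) i * M⁻¹ ^ a) ≤ χ i := by
  intro n
  induction n with
  | zero => intro i; simp [(hχ i).1.le]
  | succ n IH =>
    intro i
    set l := (N i).card with hl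
    set J : Fin l → Fin m := fun k => ((N i).sort (· ≤ ·)).get
      (Fin.cast ((N i).length_sort (· ≤ ·)).symm k) with hJ
    have hpnonneg : 0 ≤ p i := by
      rw [hp i]
      exact mul_nonneg (hχ i).1.le (Finset.prod_nonneg fun j _ => by linarith [(hχ j).2])
    have hQMnonneg : ∀ (b : ℕ) (j : Fin m), 0 ≤ Q b j * M⁻¹ ^ b :=
      fun b j => mul_nonneg (hQnonneg b j) (pow_nonneg (inv_nonneg.2 hM.le) b)
    calc ∑ a ∈ Finset.range (n + 1), Q (a + 1) i * M⁻¹ ^ a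
        ≤ ∑ a ∈ Finset.range (n + 1),
            (p i * ∑ f ∈ Finset.Nat.antidiagonalTuple l a, ∏ k : Fin l, Q (f k) (J k))
              * M⁻¹ ^ a := by
          refine Finset.sum_le_sum fun a _ => ?_
          refine mul_le_mul_of_nonneg_right ?_ (pow_nonneg (inv_nonneg.2 hM.le) a)
          have := hrec (a + 1) (by omega) i
          rw [Nat.add_sub_cancel] at this
          exact this
      _ = p i * ∑ a ∈ Finset.range (n + 1),
            ∑ f ∈ Finset.Nat.antidiagonalTuple l a,
              ∏ k : Fin l, (Q (f k) (J k) * M⁻¹ ^ (f k)) := by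
          rw [Finset.mul_sum]
          refine Finset.sum_congr rfl fun a _ => ?_
          rw [mul_assoc]
          congr 1
          rw [Finset.sum_mul]
          refine Finset.sum_congr rfl fun f hf => ?_
          have hsum : ∑ k : Fin l, f k = a := (Finset.Nat.mem_antidiagonalTuple.mp hf)
          rw [Finset.prod_mul_distrib, Finset.prod_pow_eq_pow_sum, hsum]
      _ ≤ p i * ∑ f ∈ Fintype.piFinset (fun _ : Fin l => Finset.range (n + 1)),
              ∏ k : Fin l, (Q (f k) (J k) * M⁻¹ ^ (f k)) := by
          refine mul_le_mul_of_nonneg_left ?_ hpnonneg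
          have hdisj : (↑(Finset.range (n + 1)) : Set ℕ).PairwiseDisjoint
              (fun a => Finset.Nat.antidiagonalTuple l a) := by
            intro a _ b _ hab
            simp only [Function.onFun, Finset.disjoint_left]
            intro f hfa hfb
            exact hab ((Finset.Nat.mem_antidiagonalTuple.mp hfa).symm.trans
              (Finset.Nat.mem_antidiagonalTuple.mp hfb))
          rw [← Finset.sum_biUnion hdisj]
          refine Finset.sum_le_sum_of_subset_of_nonneg ?_
            (fun f _ _ => Finset.prod_nonneg fun k _ => hQMnonneg _ _)
          intro f hf
          rcases Finset.mem_biUnion.mp hf with ⟨a, ha, hfa⟩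
          have hsum : ∑ k : Fin l, f k = a := Finset.Nat.mem_antidiagonalTuple.mp hfa
          rw [Fintype.mem_piFinset]
          intro k
          rw [Finset.mem_range] at ha ⊢
          have : f k ≤ a := hsum ▸ Finset.single_le_sum
            (fun j _ => Nat.zero_le (f j)) (Finset.mem_univ k)
          omega
      _ = p i * ∏ k : Fin l, ∑ b ∈ Finset.range (n + 1), Q b (J k) * M⁻¹ ^ b := by
          rw [Finset.prod_univ_sum]
      _ ≤ p i * ∏ k : Fin l, (χ (J k) * M⁻¹ + 1) := by
          refine mul_le_mul_of_nonneg_left (Finset.prod_le_prod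
            (fun k _ => Finset.sum_nonneg fun b _ => hQMnonneg _ _) fun k _ => ?_) hpnonneg
          rw [Finset.sum_range_succ']
          have h0 : Q 0 (J k) * M⁻¹ ^ 0 = 1 := by rw [hQ0]; simp
          rw [h0]
          have : ∑ b ∈ Finset.range n, Q (b + 1) (J k) * M⁻¹ ^ (b + 1)
              = (∑ b ∈ Finset.range n, Q (b + 1) (J k) * M⁻¹ ^ b) * M⁻¹ := by
            rw [Finset.sum_mul]
            exact Finset.sum_congr rfl fun b _ => by ring
          rw [this]
          have hIH := IH (J k)
          have hMi : (0:ℝ) ≤ M⁻¹ := inv_nonneg.2 hM.le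
          nlinarith [hIH, hMi]
      _ ≤ χ i := by
          rw [hp i, mul_assoc]
          have hconv : (∏ k : Fin l, (χ (J k) * M⁻¹ + 1))
              = ∏ j ∈ N i, (χ j * M⁻¹ + 1) := sortProd (N i) (fun j => χ j * M⁻¹ + 1)
          rw [hconv, ← Finset.prod_mul_distrib]
          have : (∏ j ∈ N i, (1 - χ j) * (χ j * M⁻¹ + 1)) ≤ 1 := by
            refine Finset.prod_le_one (fun j _ => ?_) (fun j _ => ?_)
            · refine mul_nonneg (by linarith [(hχ j).2]) ?_
              have : (0:ℝ) ≤ χ j * M⁻¹ := mul_nonneg (hχ j).1.le (inv_nonneg.2 hM.le)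
              linarith
            · rw [← sub_nonneg]
              have heq : 1 - (1 - χ j) * (χ j * M⁻¹ + 1)
                  = (χ j * (M - (1 - χ j))) * M⁻¹ := by field_simp; ring
              rw [heq]
              exact mul_nonneg (mul_nonneg (hχ j).1.le (by linarith [hMmax j]))
                (inv_nonneg.2 hM.le)
          calc χ i * ∏ j ∈ N i, (1 - χ j) * (χ j * M⁻¹ + 1)
              ≤ χ i * 1 := mul_le_mul_of_nonneg_left this (hχ i).1.le
            _ = χ i := mul_one _

/-- **Exponential decay of `Q_{n,i}` by direct induction.** If the nonnegative
reals `Q n i` (with `Q 0 j = 1`) satisfy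
`Q n i ≤ p i * ∑_{n₁+⋯+n_l = n-1} ∏_k Q (n_k) (i_k)` where `N i = {i₁ < … < i_l}`
(`i ∈ N i`) and `p i = χ i ∏_{j ∈ N i} (1 - χ j)` with `χ j ∈ (0,1)`, then for
every `n ≥ 1` and `i`, `Q n i ≤ χ i · M^(n-1)` where `M = max_j (1 - χ j)`. -/
theorem Q_exponential_decay {m : ℕ} (hm : 0 < m)
    (χ : Fin m → ℝ) (hχ : ∀ i, χ i ∈ Set.Ioo (0 : ℝ) 1)
    (N : Fin m → Finset (Fin m)) (hself : ∀ i, i ∈ N i)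
    (p : Fin m → ℝ) (hp : ∀ i, p i = χ i * ∏ j ∈ N i, (1 - χ j))
    (Q : ℕ → Fin m → ℝ) (hQ0 : ∀ j, Q 0 j = 1) (hQnonneg : ∀ n i, 0 ≤ Q n i)
    (hrec : ∀ (n : ℕ), 1 ≤ n → ∀ i : Fin m,
      Q n i ≤ p i *
        ∑ f ∈ Finset.Nat.antidiagonalTuple (N i).card (n - 1),
          ∏ k : Fin (N i).card,
            Q (f k) (((N i).sort (· ≤ ·)).get
              (Fin.cast ((N i).length_sort (· ≤ ·)).symm k))) :
    ∀ (n : ℕ), 1 ≤ n → ∀ i : Fin m,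
      Q n i ≤ χ i *
        (Finset.univ.sup' (Finset.univ_nonempty_iff.2 (Fin.pos_iff_nonempty.1 hm))
          (fun j => 1 - χ j)) ^ (n - 1) := by
  intro n hn i
  set M : ℝ := Finset.univ.sup' (Finset.univ_nonempty_iff.2 (Fin.pos_iff_nonempty.1 hm))
    (fun j => 1 - χ j) with hMdef
  have hMmax : ∀ j, 1 - χ j ≤ M := by
    intro j
    rw [hMdef]
    exact Finset.le_sup' (fun j => 1 - χ j) (Finset.mem_univ j)
  have hM : 0 < M := by
    have j0 : Fin m := ⟨0, hm⟩
    have := hMmax j0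
    have := (hχ j0).2
    linarith
  have key := partial_sum_bound χ hχ N p hp Q hQ0 hQnonneg hrec M hM hMmax n i
  have hterm : Q n i * M⁻¹ ^ (n - 1) ≤ χ i := by
    refine le_trans ?_ key
    have hmem : n - 1 ∈ Finset.range n := Finset.mem_range.mpr (by omega)
    have := Finset.single_le_sum (f := fun a => Q (a + 1) i * M⁻¹ ^ a)
      (fun a _ => mul_nonneg (hQnonneg _ _) (pow_nonneg (inv_nonneg.2 hM.le) a)) hmem
    have hn1 : n - 1 + 1 = n := by omega
    rwa [hn1] at this
  have hMpow : (0:ℝ) < M ^ (n - 1) := pow_pos hM _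
  have := mul_le_mul_of_nonneg_right hterm hMpow.le
  calc Q n i = Q n i * M⁻¹ ^ (n - 1) * M ^ (n - 1) := by
        rw [mul_assoc, ← mul_pow, inv_mul_cancel₀ hM.ne', one_pow, mul_one]
    _ ≤ χ i * M ^ (n - 1) := this
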